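/- The dihedral group D_{12} ≅ Sym(3) × C_2 has exactly 13 nonpower subgroups. -/

import Mathlib

/-- The power subgroup `G^m`: the subgroup generated by all `m`-th powers. -/
def powSub (G : Type*) [Group G] (m : ℕ) : Subgroup G :=
  Subgroup.closure {x : G | ∃ g : G, g ^ m = x}

/-- A subgroup is a nonpower subgroup if it is not `G^m` for any `m ≥ 1`. -/
def IsNonpower {G : Type*} [Group G] (H : Subgroup G) : Prop :=
  ¬ ∃ m : ℕ, 0 < m ∧ H = powSub G m

/-- The number of nonpower subgroups of `G`. -/
noncomputable def nps (G : Type*) [Group G] : ℕ :=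
  Nat.card {H : Subgroup G // IsNonpower H}

/-- The number of power subgroups of `G`. -/
noncomputable def ps (G : Type*) [Group G] : ℕ :=
  Nat.card {H : Subgroup G // ∃ m : ℕ, 0 < m ∧ H = powSub G m}

/-- The total number of subgroups of `G`. -/
noncomputable def numSubgroups (G : Type*) [Group G] : ℕ :=
  Nat.card (Subgroup G)

namespace NpsD12

abbrev G := DihedralGroup 6
open DihedralGroup

lemma pow_six (g : G) : g ^ 6 = 1 := by
  have h := Monoid.pow_exponent_eq_one g
  rw [DihedralGroup.exponent] at h
  exact h

lemma inv_r (i : ZMod 6) : (r i : G)⁻¹ = r (-i) := rfl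

lemma r_pow (i : ZMod 6) (m : ℕ) : (r i : G) ^ m = r ((m : ZMod 6) * i) := by
  induction m with
  | zero => rw [pow_zero, Nat.cast_zero, zero_mul, one_def]
  | succ k ih => rw [pow_succ, ih, r_mul_r]; push_cast; ring_nf

lemma r_zpow (i : ZMod 6) (m : ℤ) : (r i : G) ^ m = r ((m : ZMod 6) * i) := by
  cases m with
  | ofNat k => simpa using r_pow i k
  | negSucc k =>
      rw [zpow_negSucc, r_pow, inv_r]
      congr 1
      push_cast [Int.negSucc_eq]
      ring

lemma pow_mod (g : G) (m : ℕ) : g ^ m = g ^ (m % 6) := by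
  conv_lhs => rw [← Nat.div_add_mod m 6]
  rw [pow_add, pow_mul, pow_six, one_pow, one_mul]

lemma powSub_mod (m : ℕ) : powSub G m = powSub G (m % 6) := by
  unfold powSub
  congr 1
  ext x
  constructor
  · rintro ⟨g, rfl⟩; exact ⟨g, (pow_mod g m).symm⟩
  · rintro ⟨g, rfl⟩; exact ⟨g, pow_mod g m⟩

/-- The subgroup of rotations by multiples of 2. -/
def K : Subgroup G := Subgroup.zpowers (r 2)

lemma powSub_zero : powSub G 0 = ⊥ := by
  rw [powSub, Subgroup.closure_eq_bot_iff]
  rintro x ⟨g, rfl⟩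
  simp

lemma powSub_odd_top (m : ℕ) (hm : m % 2 = 1) : powSub G m = ⊤ := by
  have hsr : ∀ i : ZMod 6, (sr i : G) ∈ powSub G m := by
    intro i
    apply Subgroup.subset_closure
    refine ⟨sr i, ?_⟩
    obtain ⟨k, hk⟩ : ∃ k, m = 2 * k + 1 := ⟨m / 2, by omega⟩
    rw [hk, pow_add, pow_mul, sq, sr_mul_self, one_pow, one_mul, pow_one]
  rw [eq_top_iff]
  rintro (i | i) -
  · have : (r i : G) = sr 0 * sr i := by rw [sr_mul_sr, sub_zero]
    rw [this]
    exact mul_mem (hsr 0) (hsr i)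
  · exact hsr i

lemma powSub_two : powSub G 2 = K := by
  apply le_antisymm
  · rw [powSub, Subgroup.closure_le]
    rintro x ⟨g, rfl⟩
    rcases g with i | i
    · rw [sq, r_mul_r]
      have : (r (i + i) : G) = r 2 ^ (i.val) := by
        rw [r_pow, ZMod.natCast_val, ZMod.cast_id]
        congr 1; ring
      rw [this]
      exact Subgroup.pow_mem _ (Subgroup.mem_zpowers _) _
    · rw [sq, sr_mul_self]
      exact one_mem _
  · rw [K, Subgroup.zpowers_le]
    exact Subgroup.subset_closure ⟨r 1, by rw [sq, r_mul_r]; norm_num⟩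

lemma powSub_four : powSub G 4 = powSub G 2 := by
  unfold powSub
  congr 1
  ext x
  constructor
  · rintro ⟨g, rfl⟩; exact ⟨g ^ 2, by rw [← pow_mul]⟩
  · rintro ⟨g, rfl⟩
    refine ⟨g ^ 2, ?_⟩
    rw [← pow_mul]
    rw [pow_mod]

lemma powSub_classify (m : ℕ) :
    powSub G m = ⊤ ∨ powSub G m = K ∨ powSub G m = ⊥ := by
  rw [powSub_mod]
  have h6 : m % 6 < 6 := Nat.mod_lt _ (by norm_num)
  interval_cases h : m % 6
  · exact Or.inr (Or.inr powSub_zero)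
  · exact Or.inl (powSub_odd_top 1 rfl)
  · exact Or.inr (Or.inl powSub_two)
  · exact Or.inl (powSub_odd_top 3 rfl)
  · exact Or.inr (Or.inl (powSub_four.trans powSub_two))
  · exact Or.inl (powSub_odd_top 5 rfl)

lemma K_ne_top : K ≠ ⊤ := by
  intro h
  have : (sr 0 : G) ∈ K := h ▸ Subgroup.mem_top _
  obtain ⟨k, hk⟩ := this
  simp only [r_zpow] at hk
  exact absurd hk (by simp)

lemma K_ne_bot : K ≠ ⊥ := by
  intro h
  have : (r 2 : G) ∈ K := Subgroup.mem_zpowers _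
  rw [h, Subgroup.mem_bot, one_def] at this
  have : (2 : ZMod 6) = 0 := r.inj this
  exact absurd this (by decide)

lemma top_ne_bot : (⊤ : Subgroup G) ≠ ⊥ := by
  intro h
  have : (sr 0 : G) ∈ (⊤ : Subgroup G) := Subgroup.mem_top _
  rw [h, Subgroup.mem_bot, one_def] at this
  exact absurd this (by decide)

lemma isNonpower_iff (H : Subgroup G) :
    IsNonpower H ↔ ¬ (H = ⊤ ∨ H = K ∨ H = ⊥) := by
  constructor
  · intro h hc
    apply h
    rcases hc with rfl | rfl | rfl
    · exact ⟨1, one_pos, (powSub_odd_top 1 rfl).symm⟩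
    · exact ⟨2, by norm_num, powSub_two.symm⟩
    · exact ⟨6, by norm_num, by rw [powSub_mod]; exact powSub_zero.symm⟩
  · rintro h ⟨m, hm, rfl⟩
    exact h (powSub_classify m)

/-- The decidable model of subgroups: nonempty, division-closed finsets. -/
noncomputable def subEquiv :
    Subgroup G ≃ {s : Finset G // 1 ∈ s ∧ ∀ a ∈ s, ∀ b ∈ s, a * b⁻¹ ∈ s} where
  toFun H := ⟨(Set.toFinite (H : Set G)).toFinset, by
      simp only [Set.Finite.mem_toFinset, SetLike.mem_coe]
      exact one_mem H, by
      intro a ha b hb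
      simp only [Set.Finite.mem_toFinset, SetLike.mem_coe] at *
      exact mul_mem ha (inv_mem hb)⟩
  invFun s :=
    { carrier := ↑s.1
      one_mem' := by exact_mod_cast s.2.1
      inv_mem' := by
        intro b hb
        simp only [Finset.mem_coe] at *
        simpa using s.2.2 1 s.2.1 b hb
      mul_mem' := by
        intro a b ha hb
        simp only [Finset.mem_coe] at *
        have hbi : b⁻¹ ∈ s.1 := by simpa using s.2.2 1 s.2.1 b hb
        simpa using s.2.2 a ha b⁻¹ hbi }
  left_inv H := by
    ext x
    simp [Set.Finite.mem_toFinset]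
  right_inv s := by
    apply Subtype.ext
    ext x
    simp [Set.Finite.mem_toFinset]

set_option maxRecDepth 100000 in
set_option maxHeartbeats 4000000 in
lemma card_subgroups : Nat.card (Subgroup G) = 16 := by
  rw [Nat.card_congr subEquiv, Nat.card_eq_fintype_card]
  decide

lemma card_not_nonpower : Nat.card {H : Subgroup G // ¬ IsNonpower H} = 3 := by
  have hset : {H : Subgroup G | ¬ IsNonpower H} = {⊤, K, ⊥} := by
    ext H
    simp only [Set.mem_setOf_eq, isNonpower_iff, not_not, Set.mem_insert_iff,
      Set.mem_singleton_iff]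
  have : Nat.card {H : Subgroup G // ¬ IsNonpower H}
      = ({⊤, K, ⊥} : Set (Subgroup G)).ncard := by
    rw [← Nat.card_coe_set_eq, ← hset]
    rfl
  rw [this, Set.ncard_insert_of_notMem (by simp [K_ne_top.symm, top_ne_bot]),
    Set.ncard_pair K_ne_bot]

theorem main : nps (DihedralGroup 6) = 13 := by
  classical
  have hsum : Nat.card {H : Subgroup G // IsNonpower H}
      + Nat.card {H : Subgroup G // ¬ IsNonpower H} = Nat.card (Subgroup G) := by
    rw [← Nat.card_sum]
    exact Nat.card_congr (Equiv.sumCompl IsNonpower)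
  rw [card_not_nonpower, card_subgroups] at hsum
  show Nat.card {H : Subgroup G // IsNonpower H} = 13
  omega

end NpsD12

theorem nps_D12 : nps (DihedralGroup 6) = 13 := NpsD12.main
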